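/- arXiv:1409.7738 — 7 statements merged into one kernel-verified Lean document; each statement's English description precedes it below -/
import Mathlib

section
/- Every proper metric space is stable: if M is a metric space in which every closed ball is compact, then for any two bounded sequences (x_n) and (y_n) in M and any two non-principal ultrafilters U, V on ℕ, one has lim_{m,U} lim_{n,V} d(x_m, y_n) = lim_{n,V} lim_{m,U} d(x_m, y_n). -/
open Filter Metric

/-- In a proper space, a bounded sequence converges along any ultrafilter. -/
lemma exists_ultrafilter_limit {M : Type*} [MetricSpace M] [ProperSpace M]
    (x : ℕ → M) (hx : Bornology.IsBounded (Set.range x)) (U : Ultrafilter ℕ) :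
    ∃ p : M, Tendsto x (U : Filter ℕ) (nhds p) := by
  have hc : IsCompact (closure (Set.range x)) := hx.isCompact_closure
  have hle : (U.map x : Filter M) ≤ Filter.principal (closure (Set.range x)) := by
    simp only [Ultrafilter.coe_map, Filter.le_principal_iff, Filter.mem_map]
    exact Filter.univ_mem' fun n => subset_closure ⟨n, rfl⟩
  obtain ⟨p, _, hp⟩ := hc.ultrafilter_le_nhds (U.map x) hle
  exact ⟨p, hp⟩

/-- Every proper metric space is stable: iterated ultrafilter limits of distances
between bounded sequences exist and coincide. -/
theorem proper_is_stable {M : Type*} [MetricSpace M] [ProperSpace M]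
    (x y : ℕ → M)
    (hx : Bornology.IsBounded (Set.range x)) (hy : Bornology.IsBounded (Set.range y))
    (U V : Ultrafilter ℕ)
    (hU : ∀ k : ℕ, (U : Filter ℕ) ≠ pure k) (hV : ∀ k : ℕ, (V : Filter ℕ) ≠ pure k) :
    ∃ (a b : ℕ → ℝ) (L : ℝ),
      (∀ m, Tendsto (fun n => dist (x m) (y n)) (V : Filter ℕ) (nhds (a m))) ∧
      (∀ n, Tendsto (fun m => dist (x m) (y n)) (U : Filter ℕ) (nhds (b n))) ∧
      Tendsto a (U : Filter ℕ) (nhds L) ∧ Tendsto b (V : Filter ℕ) (nhds L) := by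
  obtain ⟨p, hp⟩ := exists_ultrafilter_limit x hx U
  obtain ⟨q, hq⟩ := exists_ultrafilter_limit y hy V
  refine ⟨fun m => dist (x m) q, fun n => dist p (y n), dist p q, ?_, ?_, ?_, ?_⟩
  · exact fun m => (Continuous.tendsto (continuous_const.dist continuous_id) q).comp hq
  · exact fun n => (Continuous.tendsto (continuous_id.dist continuous_const) p).comp hp
  · exact (Continuous.tendsto (continuous_id.dist continuous_const) p).comp hp
  · exact (Continuous.tendsto (continuous_const.dist continuous_id) q).comp hq
end

section
/- Every Hilbert space is stable: for any two bounded sequences (x_n), (y_n) in a real inner product space H (complete) and any two non-principal ultrafilters U, V on ℕ, lim_{m,U} lim_{n,V} ‖x_m − y_n‖ = lim_{n,V} lim_{m,U} ‖x_m − y_n‖. -/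
open Filter Metric

open RealInnerProductSpace in
/-- A bounded real sequence has a limit along any ultrafilter. -/
lemma ulim_exists (U : Ultrafilter ℕ) {f : ℕ → ℝ} {C : ℝ} (hf : ∀ n, |f n| ≤ C) :
    ∃ c, Tendsto f (U : Filter ℕ) (nhds c) := by
  have hmem : ∀ n, f n ∈ Set.Icc (-C) C := fun n => abs_le.mp (hf n)
  have hle : (U.map f : Filter ℝ) ≤ Filter.principal (Set.Icc (-C) C) := by
    rw [Filter.le_principal_iff]
    exact Filter.mem_map.mpr (Filter.univ_mem' hmem)
  obtain ⟨c, _, h⟩ := (isCompact_Icc (a := -C) (b := C)).ultrafilter_le_nhds (U.map f) hle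
  exact ⟨c, h⟩

open RealInnerProductSpace in
/-- A bounded sequence in a real Hilbert space has a weak limit along any ultrafilter. -/
lemma weak_ulim {H : Type*} [NormedAddCommGroup H] [InnerProductSpace ℝ H] [CompleteSpace H]
    (U : Ultrafilter ℕ) (x : ℕ → H) {C : ℝ} (hC : ∀ m, ‖x m‖ ≤ C) :
    ∃ w : H, ∀ z : H, Tendsto (fun m => ⟪x m, z⟫) (U : Filter ℕ) (nhds ⟪w, z⟫) := by
  have hex : ∀ z : H, ∃ c, Tendsto (fun m => ⟪x m, z⟫) (U : Filter ℕ) (nhds c) := by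
    intro z
    refine ulim_exists U (C := C * ‖z‖) (fun m => ?_)
    calc |⟪x m, z⟫| ≤ ‖x m‖ * ‖z‖ := abs_real_inner_le_norm _ _
      _ ≤ C * ‖z‖ := mul_le_mul_of_nonneg_right (hC m) (norm_nonneg _)
  choose g hg using hex
  have hadd : ∀ z w : H, g (z + w) = g z + g w := by
    intro z w
    refine tendsto_nhds_unique (hg (z + w)) ?_
    have := (hg z).add (hg w)
    simpa [inner_add_right] using this
  have hsmul : ∀ (c : ℝ) (z : H), g (c • z) = c * g z := by
    intro c z
    refine tendsto_nhds_unique (hg (c • z)) ?_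
    have := (hg z).const_mul c
    simpa [real_inner_smul_right] using this
  let φ : H →ₗ[ℝ] ℝ :=
    { toFun := g, map_add' := hadd, map_smul' := hsmul }
  have hbound : ∀ z : H, ‖φ z‖ ≤ C * ‖z‖ := by
    intro z
    have h1 : Tendsto (fun m => |⟪x m, z⟫|) (U : Filter ℕ) (nhds |g z|) := (hg z).abs
    have h2 : ∀ m, |⟪x m, z⟫| ≤ C * ‖z‖ := fun m =>
      le_trans (abs_real_inner_le_norm _ _)
        (mul_le_mul_of_nonneg_right (hC m) (norm_nonneg _))
    exact le_of_tendsto h1 (Filter.Eventually.of_forall h2)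
  let φ' : H →L[ℝ] ℝ := φ.mkContinuous C hbound
  refine ⟨(InnerProductSpace.toDual ℝ H).symm φ', fun z => ?_⟩
  have : (⟪(InnerProductSpace.toDual ℝ H).symm φ', z⟫ : ℝ) = φ' z :=
    InnerProductSpace.toDual_symm_apply
  rw [this]
  exact hg z

open RealInnerProductSpace in
/-- Every real Hilbert space is stable: iterated ultrafilter limits of norms of
differences of bounded sequences exist and coincide. -/
theorem hilbert_is_stable {H : Type*} [NormedAddCommGroup H] [InnerProductSpace ℝ H]
    [CompleteSpace H]
    (x y : ℕ → H)
    (hx : Bornology.IsBounded (Set.range x)) (hy : Bornology.IsBounded (Set.range y))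
    (U V : Ultrafilter ℕ)
    (hU : ∀ k : ℕ, (U : Filter ℕ) ≠ pure k) (hV : ∀ k : ℕ, (V : Filter ℕ) ≠ pure k) :
    ∃ (a b : ℕ → ℝ) (L : ℝ),
      (∀ m, Tendsto (fun n => ‖x m - y n‖) (V : Filter ℕ) (nhds (a m))) ∧
      (∀ n, Tendsto (fun m => ‖x m - y n‖) (U : Filter ℕ) (nhds (b n))) ∧
      Tendsto a (U : Filter ℕ) (nhds L) ∧ Tendsto b (V : Filter ℕ) (nhds L) := by
  obtain ⟨Cx, hCx'⟩ := isBounded_iff_forall_norm_le.mp hx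
  obtain ⟨Cy, hCy'⟩ := isBounded_iff_forall_norm_le.mp hy
  have hCx : ∀ m, ‖x m‖ ≤ Cx := fun m => hCx' _ (Set.mem_range_self m)
  have hCy : ∀ n, ‖y n‖ ≤ Cy := fun n => hCy' _ (Set.mem_range_self n)
  -- weak ultralimits
  obtain ⟨xw, hxw⟩ := weak_ulim U x hCx
  obtain ⟨yw, hyw⟩ := weak_ulim V y hCy
  -- limits of squared norms
  have habsx : ∀ m, |‖x m‖ ^ 2| ≤ Cx ^ 2 := by
    intro m
    rw [abs_of_nonneg (by positivity)]
    exact pow_le_pow_left₀ (norm_nonneg _) (hCx m) 2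
  have habsy : ∀ n, |‖y n‖ ^ 2| ≤ Cy ^ 2 := by
    intro n
    rw [abs_of_nonneg (by positivity)]
    exact pow_le_pow_left₀ (norm_nonneg _) (hCy n) 2
  obtain ⟨p, hp⟩ := ulim_exists U habsx
  obtain ⟨q, hq⟩ := ulim_exists V habsy
  -- the sequences a and b
  have hbd : ∀ m n, |‖x m - y n‖| ≤ Cx + Cy := by
    intro m n
    rw [abs_of_nonneg (norm_nonneg _)]
    exact (norm_sub_le _ _).trans (add_le_add (hCx m) (hCy n))
  have hA : ∀ m, ∃ c, Tendsto (fun n => ‖x m - y n‖) (V : Filter ℕ) (nhds c) :=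
    fun m => ulim_exists V (fun n => hbd m n)
  have hB : ∀ n, ∃ c, Tendsto (fun m => ‖x m - y n‖) (U : Filter ℕ) (nhds c) :=
    fun n => ulim_exists U (fun m => hbd m n)
  choose a ha using hA
  choose b hb using hB
  -- nonnegativity and boundedness of a and b
  have ha0 : ∀ m, 0 ≤ a m := fun m =>
    ge_of_tendsto (ha m) (Filter.Eventually.of_forall fun n => norm_nonneg _)
  have hb0 : ∀ n, 0 ≤ b n := fun n =>
    ge_of_tendsto (hb n) (Filter.Eventually.of_forall fun m => norm_nonneg _)
  have haB : ∀ m, |a m| ≤ Cx + Cy := fun m => by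
    rw [abs_of_nonneg (ha0 m)]
    exact le_of_tendsto (ha m) (Filter.Eventually.of_forall fun n =>
      (abs_le.mp (hbd m n)).2)
  have hbB : ∀ n, |b n| ≤ Cx + Cy := fun n => by
    rw [abs_of_nonneg (hb0 n)]
    exact le_of_tendsto (hb n) (Filter.Eventually.of_forall fun m =>
      (abs_le.mp (hbd m n)).2)
  obtain ⟨L, hL⟩ := ulim_exists U haB
  obtain ⟨L', hL'⟩ := ulim_exists V hbB
  have hL0 : 0 ≤ L := ge_of_tendsto hL (Filter.Eventually.of_forall ha0)
  have hL'0 : 0 ≤ L' := ge_of_tendsto hL' (Filter.Eventually.of_forall hb0)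
  -- identify a m ^ 2
  have ha2 : ∀ m, a m ^ 2 = ‖x m‖ ^ 2 - 2 * ⟪x m, yw⟫ + q := by
    intro m
    refine tendsto_nhds_unique ((ha m).pow 2) ?_
    have h1 : Tendsto (fun n => ⟪x m, y n⟫) (V : Filter ℕ) (nhds ⟪x m, yw⟫) := by
      have := hyw (x m)
      simpa [real_inner_comm] using this
    have h2 : Tendsto (fun n => ‖x m‖ ^ 2 - 2 * ⟪x m, y n⟫ + ‖y n‖ ^ 2)
        (V : Filter ℕ) (nhds (‖x m‖ ^ 2 - 2 * ⟪x m, yw⟫ + q)) :=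
      (tendsto_const_nhds.sub (h1.const_mul 2)).add hq
    refine h2.congr (fun n => ?_)
    exact (norm_sub_sq_real _ _).symm
  -- identify b n ^ 2
  have hb2 : ∀ n, b n ^ 2 = p - 2 * ⟪xw, y n⟫ + ‖y n‖ ^ 2 := by
    intro n
    refine tendsto_nhds_unique ((hb n).pow 2) ?_
    have h1 : Tendsto (fun m => ⟪x m, y n⟫) (U : Filter ℕ) (nhds ⟪xw, y n⟫) := hxw (y n)
    have h2 : Tendsto (fun m => ‖x m‖ ^ 2 - 2 * ⟪x m, y n⟫ + ‖y n‖ ^ 2)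
        (U : Filter ℕ) (nhds (p - 2 * ⟪xw, y n⟫ + ‖y n‖ ^ 2)) :=
      (hp.sub (h1.const_mul 2)).add tendsto_const_nhds
    refine h2.congr (fun m => ?_)
    exact (norm_sub_sq_real _ _).symm
  -- L ^ 2 = p - 2 ⟪xw, yw⟫ + q
  have hLsq : L ^ 2 = p - 2 * ⟪xw, yw⟫ + q := by
    refine tendsto_nhds_unique (hL.pow 2) ?_
    have h1 : Tendsto (fun m => ⟪x m, yw⟫) (U : Filter ℕ) (nhds ⟪xw, yw⟫) := hxw yw
    have h2 : Tendsto (fun m => ‖x m‖ ^ 2 - 2 * ⟪x m, yw⟫ + q)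
        (U : Filter ℕ) (nhds (p - 2 * ⟪xw, yw⟫ + q)) :=
      (hp.sub (h1.const_mul 2)).add tendsto_const_nhds
    exact h2.congr (fun m => (ha2 m).symm)
  have hL'sq : L' ^ 2 = p - 2 * ⟪xw, yw⟫ + q := by
    refine tendsto_nhds_unique (hL'.pow 2) ?_
    have h1 : Tendsto (fun n => ⟪xw, y n⟫) (V : Filter ℕ) (nhds ⟪xw, yw⟫) := by
      have := hyw xw
      simpa [real_inner_comm] using this
    have h2 : Tendsto (fun n => p - 2 * ⟪xw, y n⟫ + ‖y n‖ ^ 2)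
        (V : Filter ℕ) (nhds (p - 2 * ⟪xw, yw⟫ + q)) :=
      (tendsto_const_nhds.sub (h1.const_mul 2)).add hq
    exact h2.congr (fun n => (hb2 n).symm)
  have hLL' : L = L' := by
    have hsq : L ^ 2 = L' ^ 2 := by rw [hLsq, hL'sq]
    nlinarith
  exact ⟨a, b, L, ha, hb, hL, hLL' ▸ hL'⟩
end

section
/- Let (x_n) be a bounded sequence in ℓ_p (1 ≤ p < ∞) and U a non-principal ultrafilter on ℕ such that lim_{n,U} e_i*(x_n) = 0 for every coordinate i (coordinatewise convergence to 0 along U). Then for every x ∈ ℓ_p, lim_{n,U} ‖x + x_n‖_p^p = ‖x‖_p^p + lim_{n,U} ‖x_n‖_p^p. -/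
open Filter Metric
open scoped ENNReal

private lemma lp_single_add (p : ℝ≥0∞) (i : ℕ) (a b : ℝ) :
    lp.single (E := fun _ : ℕ => ℝ) p i (a + b) = lp.single p i a + lp.single p i b := by
  apply lp.ext
  funext j
  by_cases h : j = i
  · subst h
    simp [lp.single_apply_self, lp.coeFn_add]
  · simp [lp.single_apply_ne p i _ h, lp.coeFn_add]

/-- Garling's lemma: if a bounded sequence in `ℓ_p` converges coordinatewise to `0`
along a non-principal ultrafilter `U`, then `lim_U ‖x + x_n‖^p = ‖x‖^p + lim_U ‖x_n‖^p`. -/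
theorem lp_asymptotic_additivity (p : ℝ≥0∞) [hp1 : Fact (1 ≤ p)] (hp2 : p ≠ ∞)
    (xs : ℕ → lp (fun _ : ℕ => ℝ) p)
    (hb : Bornology.IsBounded (Set.range xs))
    (U : Ultrafilter ℕ) (hU : ∀ k : ℕ, (U : Filter ℕ) ≠ pure k)
    (hcoord : ∀ i : ℕ, Tendsto (fun n => (xs n : ∀ _ : ℕ, ℝ) i) (U : Filter ℕ) (nhds 0))
    (x : lp (fun _ : ℕ => ℝ) p) (ℓ : ℝ)
    (hℓ : Tendsto (fun n => ‖xs n‖ ^ p.toReal) (U : Filter ℕ) (nhds ℓ)) :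
    Tendsto (fun n => ‖x + xs n‖ ^ p.toReal) (U : Filter ℕ)
      (nhds (‖x‖ ^ p.toReal + ℓ)) := by
  have hp0 : p ≠ 0 := by
    intro h
    exact absurd (h ▸ hp1.out) (by simp)
  set pt := p.toReal with hpt_def
  have hpt : 0 < pt := ENNReal.toReal_pos hp0 hp2
  -- continuity of t ↦ ‖t‖ ^ pt at any point
  have hcont : ∀ a : ℝ, ContinuousAt (fun t : ℝ => ‖t‖ ^ pt) a := fun a => by
    exact (Real.continuousAt_rpow_const ‖a‖ pt (Or.inr hpt.le)).comp
      (continuous_norm.continuousAt)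
  -- boundedness
  obtain ⟨M, hM⟩ := isBounded_iff_forall_norm_le.1 hb
  have hMn : ∀ n, ‖xs n‖ ≤ M := fun n => hM _ (Set.mem_range_self n)
  -- the function whose limit we study
  set f : ℕ → ℝ := fun n => ‖x + xs n‖ ^ pt with hf_def
  -- existence of the limit A of f along U, by compactness
  have hfK : ∀ n, f n ∈ Set.Icc (0 : ℝ) ((‖x‖ + M) ^ pt) := by
    intro n
    constructor
    · exact Real.rpow_nonneg (norm_nonneg _) _
    · exact Real.rpow_le_rpow (norm_nonneg _)
        ((norm_add_le _ _).trans (by linarith [hMn n])) hpt.le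
  obtain ⟨A, -, hA⟩ := (isCompact_Icc (a := (0:ℝ)) (b := (‖x‖ + M) ^ pt)).ultrafilter_le_nhds
    (U.map f) (by
      rw [Ultrafilter.coe_map, Filter.le_principal_iff, Filter.mem_map]
      exact Filter.Eventually.of_forall hfK)
  rw [Ultrafilter.coe_map] at hA
  have hA' : Tendsto f (U : Filter ℕ) (nhds A) := hA
  -- ℓ is nonnegative
  have hℓ0 : 0 ≤ ℓ := ge_of_tendsto' hℓ fun n => Real.rpow_nonneg (norm_nonneg _) _
  set l1 : ℝ := ℓ ^ pt⁻¹ with hl1_def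
  -- For each N, set up the head/tail decomposition
  -- head sum S_N of x
  set S : ℕ → ℝ := fun N => ∑ i ∈ Finset.range N, ‖(x : ∀ _ : ℕ, ℝ) i‖ ^ pt with hS_def
  set ε : ℕ → ℝ := fun N => ‖x - ∑ i ∈ Finset.range N, lp.single p i ((x : ∀ _ : ℕ, ℝ) i)‖
    with hε_def
  have hεpow : ∀ N, ε N ^ pt = ‖x‖ ^ pt - S N := fun N =>
    lp.norm_compl_sum_single hpt x (Finset.range N)
  -- main estimate for each N
  have key : ∀ N : ℕ, A - S N = ((A - S N) ^ pt⁻¹) ^ pt ∧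
      |(A - S N) ^ pt⁻¹ - l1| ≤ ε N := by
    intro N
    set s := Finset.range N
    -- coordinatewise limits of the head sums
    have hSn : Tendsto (fun n => ∑ i ∈ s, ‖((x + xs n : lp _ p) : ∀ _ : ℕ, ℝ) i‖ ^ pt)
        (U : Filter ℕ) (nhds (S N)) := by
      have : Tendsto (fun n => ∑ i ∈ s, ‖(x : ∀ _ : ℕ, ℝ) i + (xs n : ∀ _ : ℕ, ℝ) i‖ ^ pt)
          (U : Filter ℕ) (nhds (∑ i ∈ s, ‖(x : ∀ _ : ℕ, ℝ) i‖ ^ pt)) := by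
        refine tendsto_finset_sum s fun i _ => ?_
        have h1 : Tendsto (fun n => (x : ∀ _ : ℕ, ℝ) i + (xs n : ∀ _ : ℕ, ℝ) i)
            (U : Filter ℕ) (nhds ((x : ∀ _ : ℕ, ℝ) i)) := by
          simpa using tendsto_const_nhds.add (hcoord i)
        exact ((hcont _).tendsto).comp h1
      simpa +zetaDelta [lp.coeFn_add, Pi.add_apply] using this
    have hS'n : Tendsto (fun n => ∑ i ∈ s, ‖(xs n : ∀ _ : ℕ, ℝ) i‖ ^ pt)
        (U : Filter ℕ) (nhds 0) := by
      have : Tendsto (fun n => ∑ i ∈ s, ‖(xs n : ∀ _ : ℕ, ℝ) i‖ ^ pt)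
          (U : Filter ℕ) (nhds (∑ i ∈ s, ‖(0 : ℝ)‖ ^ pt)) :=
        tendsto_finset_sum s fun i _ => ((hcont _).tendsto).comp (hcoord i)
      simpa [Real.zero_rpow hpt.ne'] using this
    -- tails
    set w : ℕ → ℝ := fun n =>
      ‖(x + xs n) - ∑ i ∈ s, lp.single p i (((x + xs n : lp _ p) : ∀ _ : ℕ, ℝ) i)‖ with hw_def
    set u : ℕ → ℝ := fun n =>
      ‖xs n - ∑ i ∈ s, lp.single p i ((xs n : ∀ _ : ℕ, ℝ) i)‖ with hu_def
    have hw_pow : ∀ n, w n ^ pt =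
        f n - ∑ i ∈ s, ‖((x + xs n : lp _ p) : ∀ _ : ℕ, ℝ) i‖ ^ pt := fun n =>
      lp.norm_compl_sum_single hpt (x + xs n) s
    have hu_pow : ∀ n, u n ^ pt = ‖xs n‖ ^ pt - ∑ i ∈ s, ‖(xs n : ∀ _ : ℕ, ℝ) i‖ ^ pt := fun n =>
      lp.norm_compl_sum_single hpt (xs n) s
    -- limit of u n ^ pt is ℓ
    have hu_pow_lim : Tendsto (fun n => u n ^ pt) (U : Filter ℕ) (nhds ℓ) := by
      simp only [hu_pow]
      simpa using hℓ.sub hS'n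
    -- hence u n → l1
    have hu_lim : Tendsto u (U : Filter ℕ) (nhds l1) := by
      have hcont' : ContinuousAt (fun t : ℝ => t ^ pt⁻¹) ℓ :=
        Real.continuousAt_rpow_const ℓ pt⁻¹ (Or.inr (by positivity))
      have := (hcont'.tendsto).comp hu_pow_lim
      have heq : (fun n => (u n ^ pt) ^ pt⁻¹) = u := by
        funext n
        exact Real.rpow_rpow_inv (norm_nonneg _) hpt.ne'
      rwa [Function.comp_def, heq] at this
    -- limit of w n ^ pt
    have hw_pow_lim : Tendsto (fun n => w n ^ pt) (U : Filter ℕ) (nhds (A - S N)) := by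
      simp only [hw_pow]
      exact hA'.sub hSn
    have hAS_nonneg : 0 ≤ A - S N :=
      ge_of_tendsto' hw_pow_lim fun n => Real.rpow_nonneg (norm_nonneg _) _
    have hw_lim : Tendsto w (U : Filter ℕ) (nhds ((A - S N) ^ pt⁻¹)) := by
      have hcont' : ContinuousAt (fun t : ℝ => t ^ pt⁻¹) (A - S N) :=
        Real.continuousAt_rpow_const _ pt⁻¹ (Or.inr (by positivity))
      have := (hcont'.tendsto).comp hw_pow_lim
      have heq : (fun n => (w n ^ pt) ^ pt⁻¹) = w := by
        funext n
        exact Real.rpow_rpow_inv (norm_nonneg _) hpt.ne'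
      rwa [Function.comp_def, heq] at this
    constructor
    · exact (Real.rpow_inv_rpow hAS_nonneg hpt.ne').symm
    · -- |w n - u n| ≤ ε N pointwise, pass to the limit
      have hwu : ∀ n, |w n - u n| ≤ ε N := by
        intro n
        have htail_add : (x + xs n) - ∑ i ∈ s, lp.single p i (((x + xs n : lp _ p) : ∀ _ : ℕ, ℝ) i)
            = (x - ∑ i ∈ s, lp.single p i ((x : ∀ _ : ℕ, ℝ) i))
              + (xs n - ∑ i ∈ s, lp.single p i ((xs n : ∀ _ : ℕ, ℝ) i)) := by
          have hsng : ∀ i ∈ s, lp.single (E := fun _ : ℕ => ℝ) p i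
              (((x + xs n : lp _ p) : ∀ _ : ℕ, ℝ) i)
              = lp.single p i ((x : ∀ _ : ℕ, ℝ) i) + lp.single p i ((xs n : ∀ _ : ℕ, ℝ) i) := by
            intro i _
            rw [show ((x + xs n : lp _ p) : ∀ _ : ℕ, ℝ) i
                = (x : ∀ _ : ℕ, ℝ) i + (xs n : ∀ _ : ℕ, ℝ) i by
              simp [lp.coeFn_add]]
            exact lp_single_add p i _ _
          rw [Finset.sum_congr rfl hsng, Finset.sum_add_distrib]
          abel
        have := abs_norm_sub_norm_le
          ((x - ∑ i ∈ s, lp.single p i ((x : ∀ _ : ℕ, ℝ) i))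
            + (xs n - ∑ i ∈ s, lp.single p i ((xs n : ∀ _ : ℕ, ℝ) i)))
          (xs n - ∑ i ∈ s, lp.single p i ((xs n : ∀ _ : ℕ, ℝ) i))
        simp only [add_sub_cancel_right] at this
        calc |w n - u n| = |‖(x - ∑ i ∈ s, lp.single p i ((x : ∀ _ : ℕ, ℝ) i))
              + (xs n - ∑ i ∈ s, lp.single p i ((xs n : ∀ _ : ℕ, ℝ) i))‖ - u n| := by
              rw [hw_def]; simp only [htail_add]
          _ ≤ ε N := this
      have hlim : Tendsto (fun n => |w n - u n|) (U : Filter ℕ)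
          (nhds |(A - S N) ^ pt⁻¹ - l1|) :=
        (hw_lim.sub hu_lim).abs
      exact le_of_tendsto hlim (Filter.Eventually.of_forall hwu)
  -- Now let N → ∞.
  have hS_lim : Tendsto S atTop (nhds (‖x‖ ^ pt)) :=
    (lp.hasSum_norm hpt x).tendsto_sum_nat
  have hε_lim : Tendsto ε atTop (nhds 0) := by
    have h1 : Tendsto (fun N => ε N ^ pt) atTop (nhds 0) := by
      have := tendsto_const_nhds (x := ‖x‖ ^ pt) (f := atTop (α := ℕ)) |>.sub hS_lim
      simpa [hεpow] using this
    have hcont' : ContinuousAt (fun t : ℝ => t ^ pt⁻¹) 0 :=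
      Real.continuousAt_rpow_const 0 pt⁻¹ (Or.inr (by positivity))
    have := (hcont'.tendsto).comp h1
    have heq : (fun N => (ε N ^ pt) ^ pt⁻¹) = ε := by
      funext N
      exact Real.rpow_rpow_inv (norm_nonneg _) hpt.ne'
    rw [Function.comp_def, heq] at this
    simpa [Real.zero_rpow (by positivity : pt⁻¹ ≠ 0)] using this
  -- g N := (A - S N)^(1/pt) tends to l1
  have hg_lim : Tendsto (fun N => (A - S N) ^ pt⁻¹) atTop (nhds l1) := by
    rw [tendsto_iff_dist_tendsto_zero]
    refine squeeze_zero (fun N => dist_nonneg) (fun N => ?_) hε_lim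
    rw [Real.dist_eq]
    exact (key N).2
  -- hence (g N)^pt = A - S N tends to l1^pt = ℓ
  have h2 : Tendsto (fun N => A - S N) atTop (nhds ℓ) := by
    have hcontℓ : ContinuousAt (fun t : ℝ => t ^ pt) l1 :=
      Real.continuousAt_rpow_const l1 pt (Or.inr hpt.le)
    have := (hcontℓ.tendsto).comp hg_lim
    have heq : (fun N => ((A - S N) ^ pt⁻¹) ^ pt) = fun N => A - S N := by
      funext N
      exact ((key N).1).symm
    rw [Function.comp_def, heq] at this
    have hl1 : l1 ^ pt = ℓ := Real.rpow_inv_rpow hℓ0 hpt.ne'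
    rwa [hl1] at this
  have h3 : Tendsto (fun N => A - S N) atTop (nhds (A - ‖x‖ ^ pt)) :=
    tendsto_const_nhds.sub hS_lim
  have hAval : A = ‖x‖ ^ pt + ℓ := by
    have := tendsto_nhds_unique h2 h3
    linarith
  rw [← hAval]
  exact hA'
end

section
/- No Banach space linearly isomorphic to c₀ is stable: if X is a Banach space and T : c₀ → X is a linear isomorphism onto a subspace with ‖T‖·‖T⁻¹‖ ≤ 3/2, then X is not stable, since for x_n = T(e_n) and y_m = T(Σ_{i≤m} e_i) one iterated ultrafilter limit of ‖x_n − y_m‖ is at most 3/2 while the other is at least 2. -/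
open Filter Metric
open scoped ZeroAtInfty

/-- A metric space is stable if iterated ultrafilter limits of distances between
bounded sequences exist and commute, for all non-principal ultrafilters. -/
def IsStableSpace (X : Type*) [MetricSpace X] : Prop :=
  ∀ (x y : ℕ → X), Bornology.IsBounded (Set.range x) → Bornology.IsBounded (Set.range y) →
    ∀ (U V : Ultrafilter ℕ),
      (∀ k : ℕ, (U : Filter ℕ) ≠ pure k) → (∀ k : ℕ, (V : Filter ℕ) ≠ pure k) →
      ∃ (a b : ℕ → ℝ) (L : ℝ),
        (∀ m, Tendsto (fun n => dist (x m) (y n)) (V : Filter ℕ) (nhds (a m))) ∧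
        (∀ n, Tendsto (fun m => dist (x m) (y n)) (U : Filter ℕ) (nhds (b n))) ∧
        Tendsto a (U : Filter ℕ) (nhds L) ∧ Tendsto b (V : Filter ℕ) (nhds L)

noncomputable def cz (f : ℕ → ℝ) (h : {i | f i ≠ 0}.Finite) : C₀(ℕ, ℝ) :=
  ⟨⟨f, continuous_of_discreteTopology⟩, by
    rw [cocompact_eq_cofinite]
    exact tendsto_nhds_of_eventually_eq (by rwa [Filter.eventually_cofinite])⟩

@[simp] lemma cz_apply (f : ℕ → ℝ) (h) (i : ℕ) : cz f h i = f i := rfl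

noncomputable def ee (m : ℕ) : C₀(ℕ, ℝ) :=
  cz (fun i => if i = m then 1 else 0)
    (Set.Finite.subset (Set.finite_singleton m) (by intro i hi; by_contra h; simp_all))

noncomputable def ss (n : ℕ) : C₀(ℕ, ℝ) :=
  cz (fun i => if i ≤ n then 1 else 0)
    (Set.Finite.subset (Set.finite_Iic n) (by intro i hi; by_contra h; simp_all))

lemma coord_le_norm (f : C₀(ℕ, ℝ)) (i : ℕ) : |f i| ≤ ‖f‖ := by
  rw [← ZeroAtInftyContinuousMap.norm_toBCF_eq_norm]
  exact f.toBCF.norm_coe_le_norm i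

lemma norm_le_of_coord (f : C₀(ℕ, ℝ)) {C : ℝ} (hC : 0 ≤ C) (h : ∀ i, |f i| ≤ C) : ‖f‖ ≤ C := by
  rw [← ZeroAtInftyContinuousMap.norm_toBCF_eq_norm]
  exact BoundedContinuousFunction.norm_le hC |>.2 h

lemma hyper_ne_pure (k : ℕ) : ((Filter.hyperfilter ℕ : Ultrafilter ℕ) : Filter ℕ) ≠ pure k := by
  intro h
  have : {k} ∈ (Filter.hyperfilter ℕ : Filter ℕ) := by rw [h]; exact rfl
  exact (Filter.notMem_hyperfilter_of_finite (Set.finite_singleton k)) this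

lemma ge_mem_hyper (m : ℕ) : {n | m ≤ n} ∈ (Filter.hyperfilter ℕ : Filter ℕ) := by
  apply Filter.hyperfilter_le_cofinite
  rw [Filter.mem_cofinite]
  exact (Set.finite_Iio m).subset (by intro i; simp)

/-- No Banach space linearly isomorphic to `c₀` (here: containing a `3/2`-isomorphic
copy of `c₀`) is stable. -/
theorem no_c0_isomorph_is_stable {X : Type*} [NormedAddCommGroup X] [NormedSpace ℝ X]
    [CompleteSpace X]
    (T : C₀(ℕ, ℝ) →ₗ[ℝ] X)
    (hlow : ∀ v, ‖v‖ ≤ ‖T v‖) (hup : ∀ v, ‖T v‖ ≤ (3 / 2) * ‖v‖) :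
    ¬ IsStableSpace X := by
  intro hstable
  set x : ℕ → X := fun m => T (ee m) with hx
  set y : ℕ → X := fun n => T (-(ss n)) with hy
  have hdist : ∀ m n, dist (x m) (y n) = ‖T (ee m + ss n)‖ := by
    intro m n
    simp only [hx, hy, dist_eq_norm, map_neg, sub_neg_eq_add, ← map_add]
  have hlow2 : ∀ m n, m ≤ n → (2:ℝ) ≤ dist (x m) (y n) := by
    intro m n hmn
    rw [hdist]
    refine le_trans ?_ (hlow _)
    refine le_trans ?_ (coord_le_norm _ m)
    simp [ee, ss, hmn]; norm_num
  have hup2 : ∀ m n, n < m → dist (x m) (y n) ≤ 3/2 := by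
    intro m n hnm
    rw [hdist]
    refine le_trans (hup _) ?_
    have : ‖ee m + ss n‖ ≤ 1 := by
      apply norm_le_of_coord _ zero_le_one
      intro i
      simp only [ZeroAtInftyContinuousMap.coe_add, Pi.add_apply, ee, ss, cz_apply]
      rcases eq_or_ne i m with rfl | h
      · simp [Nat.not_le.mpr hnm]
      · simp [h]; split <;> simp
    linarith
  -- boundedness
  have hbx : Bornology.IsBounded (Set.range x) := by
    rw [isBounded_iff_forall_norm_le]
    refine ⟨3/2, ?_⟩
    rintro _ ⟨m, rfl⟩
    refine le_trans (hup _) ?_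
    have : ‖ee m‖ ≤ 1 := by
      apply norm_le_of_coord _ zero_le_one
      intro i; simp only [ee, cz_apply]; split <;> simp
    linarith
  have hby : Bornology.IsBounded (Set.range y) := by
    rw [isBounded_iff_forall_norm_le]
    refine ⟨3/2, ?_⟩
    rintro _ ⟨n, rfl⟩
    refine le_trans (hup _) ?_
    have : ‖-(ss n)‖ ≤ 1 := by
      rw [norm_neg]
      apply norm_le_of_coord _ zero_le_one
      intro i; simp only [ss, cz_apply]; split <;> simp
    linarith
  obtain ⟨a, b, L, ha, hb, haL, hbL⟩ :=
    hstable x y hbx hby (Filter.hyperfilter ℕ) (Filter.hyperfilter ℕ)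
      hyper_ne_pure hyper_ne_pure
  have haU : ∀ m, (2:ℝ) ≤ a m := by
    intro m
    refine ge_of_tendsto (ha m) ?_
    filter_upwards [ge_mem_hyper m] with n hn
    exact hlow2 m n hn
  have hbV : ∀ n, b n ≤ 3/2 := by
    intro n
    refine le_of_tendsto (hb n) ?_
    filter_upwards [ge_mem_hyper (n+1)] with m hm
    exact hup2 m n hm
  have h1 : (2:ℝ) ≤ L := ge_of_tendsto' haL haU
  have h2 : L ≤ 3/2 := le_of_tendsto' hbL hbV
  linarith
end

section
/- In the gluing construction: let X, Y be Banach spaces, ε₀ > 0, M a subset of X, and for each n ∈ ℤ let f_n : B_n → Y (where B_n = {x ∈ M : ‖x‖ ≤ 2^{n+1}}) satisfy f_n(0)=0 and ‖x−y‖ ≤ ‖f_n(x)−f_n(y)‖ ≤ (1+ε₀)‖x−y‖ for x,y ∈ B_n. Define f : M → Y by f(x) = λ_x f_n(x) + (1−λ_x) f_{n+1}(x) when 2^n ≤ ‖x‖ ≤ 2^{n+1}, where λ_x = (2^{n+1} − ‖x‖)/2^n. Then f is 9(1+ε₀)-Lipschitz. -/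
open Metric

private lemma norm_add₅_le' {Y : Type*} [NormedAddCommGroup Y] (a b c d e : Y) :
    ‖a + b + c + d + e‖ ≤ ‖a‖ + ‖b‖ + ‖c‖ + ‖d‖ + ‖e‖ := by
  calc ‖a + b + c + d + e‖ ≤ ‖a + b + c + d‖ + ‖e‖ := norm_add_le _ _
    _ ≤ (‖a + b + c‖ + ‖d‖) + ‖e‖ := by have := norm_add_le (a+b+c) d; linarith
    _ ≤ ((‖a + b‖ + ‖c‖) + ‖d‖) + ‖e‖ := by have := norm_add_le (a+b) c; linarith
    _ ≤ _ := by have := norm_add_le a b; linarith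

set_option maxHeartbeats 1000000 in
private lemma gluing_aux {X Y : Type*} [NormedAddCommGroup X] [NormedAddCommGroup Y]
    [NormedSpace ℝ Y]
    (M : Set X) (hM : ∀ x ∈ M, x ≠ 0)
    (ε₀ : ℝ) (hε₀ : 0 ≤ ε₀)
    (fn : ℤ → X → Y)
    (hnorm : ∀ n : ℤ, ∀ x ∈ M, ‖x‖ ≤ (2 : ℝ) ^ (n + 1) →
      ‖x‖ ≤ ‖fn n x‖ ∧ ‖fn n x‖ ≤ (1 + ε₀) * ‖x‖)
    (hfn : ∀ n : ℤ, ∀ x ∈ M, ∀ y ∈ M, ‖x‖ ≤ (2 : ℝ) ^ (n + 1) → ‖y‖ ≤ (2 : ℝ) ^ (n + 1) →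
      ‖x - y‖ ≤ ‖fn n x - fn n y‖ ∧ ‖fn n x - fn n y‖ ≤ (1 + ε₀) * ‖x - y‖)
    (f : X → Y)
    (hf : ∀ x ∈ M, ∀ n : ℤ, (2 : ℝ) ^ n ≤ ‖x‖ → ‖x‖ ≤ (2 : ℝ) ^ (n + 1) →
      f x = ((((2 : ℝ) ^ (n + 1) - ‖x‖) / (2 : ℝ) ^ n) • fn n x)
          + ((1 - ((2 : ℝ) ^ (n + 1) - ‖x‖) / (2 : ℝ) ^ n) • fn (n + 1) x))
    (x : X) (hx : x ∈ M) (y : X) (hy : y ∈ M) (hyx : ‖y‖ ≤ ‖x‖) :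
    ‖f x - f y‖ ≤ 9 * (1 + ε₀) * ‖x - y‖ := by
  have hε1 : (1:ℝ) ≤ 1 + ε₀ := by linarith
  have hx0 : (0:ℝ) < ‖x‖ := norm_pos_iff.mpr (hM x hx)
  have hy0 : (0:ℝ) < ‖y‖ := norm_pos_iff.mpr (hM y hy)
  have hd1 : ‖x‖ - ‖y‖ ≤ ‖x - y‖ := by
    have := norm_sub_norm_le x y; linarith
  have hd0 : (0:ℝ) ≤ ‖x - y‖ := norm_nonneg _
  -- pointwise bound on ‖f z‖
  have hfnorm : ∀ z ∈ M, ‖f z‖ ≤ (1 + ε₀) * ‖z‖ := by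
    intro z hz
    have hz0 : (0:ℝ) < ‖z‖ := norm_pos_iff.mpr (hM z hz)
    set m := Int.log 2 ‖z‖ with hm
    have he : (0:ℝ) < (2:ℝ) ^ m := zpow_pos (by norm_num) m
    have h1 : (2:ℝ) ^ m ≤ ‖z‖ := Int.zpow_log_le_self (by norm_num) hz0
    have h2 : ‖z‖ ≤ (2:ℝ) ^ (m + 1) := (Int.lt_zpow_succ_log_self (by norm_num) ‖z‖).le
    have hpow : (2:ℝ) ^ (m + 1) = 2 * (2:ℝ) ^ m := by
      rw [zpow_add_one₀ (by norm_num : (2:ℝ) ≠ 0)]; ring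
    have hpow2 : ‖z‖ ≤ (2:ℝ) ^ (m + 1 + 1) := by
      rw [zpow_add_one₀ (by norm_num : (2:ℝ) ≠ 0)]; nlinarith
    rw [hf z hz m h1 h2]
    set lam := ((2:ℝ) ^ (m + 1) - ‖z‖) / (2:ℝ) ^ m with hlam
    have hlam0 : 0 ≤ lam := by
      apply div_nonneg _ he.le; linarith
    have hlam1 : lam ≤ 1 := by
      rw [div_le_one he]; linarith [hpow]
    have n1 := (hnorm m z hz h2).2
    have n2 := (hnorm (m+1) z hz hpow2).2
    calc ‖lam • fn m z + (1 - lam) • fn (m+1) z‖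
        ≤ ‖lam • fn m z‖ + ‖(1 - lam) • fn (m+1) z‖ := norm_add_le _ _
      _ = |lam| * ‖fn m z‖ + |1 - lam| * ‖fn (m+1) z‖ := by
          rw [norm_smul, norm_smul, Real.norm_eq_abs, Real.norm_eq_abs]
      _ = lam * ‖fn m z‖ + (1 - lam) * ‖fn (m+1) z‖ := by
          rw [abs_of_nonneg hlam0, abs_of_nonneg (by linarith)]
      _ ≤ lam * ((1 + ε₀) * ‖z‖) + (1 - lam) * ((1 + ε₀) * ‖z‖) := by
          have := mul_le_mul_of_nonneg_left n1 hlam0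
          have := mul_le_mul_of_nonneg_left n2 (by linarith : (0:ℝ) ≤ 1 - lam)
          linarith
      _ = (1 + ε₀) * ‖z‖ := by ring
  set n := Int.log 2 ‖x‖ with hn
  set e : ℝ := (2:ℝ) ^ n with hedef
  have he : (0:ℝ) < e := zpow_pos (by norm_num) n
  have hx1 : e ≤ ‖x‖ := Int.zpow_log_le_self (by norm_num) hx0
  have hx2 : ‖x‖ ≤ (2:ℝ) ^ (n + 1) := (Int.lt_zpow_succ_log_self (by norm_num) ‖x‖).le
  have hp1 : (2:ℝ) ^ (n + 1) = 2 * e := by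
    rw [hedef, zpow_add_one₀ (by norm_num : (2:ℝ) ≠ 0)]; ring
  have hp2 : (2:ℝ) ^ (n + 1 + 1) = 4 * e := by
    rw [zpow_add_one₀ (by norm_num : (2:ℝ) ≠ 0), hp1]; ring
  by_cases hcase : ‖y‖ ≤ ‖x‖ / 2
  · -- far apart
    have b1 := hfnorm x hx
    have b2 := hfnorm y hy
    calc ‖f x - f y‖ ≤ ‖f x‖ + ‖f y‖ := norm_sub_le _ _
      _ ≤ 9 * (1 + ε₀) * ‖x - y‖ := by nlinarith
  push_neg at hcase
  have hfx := hf x hx n hx1 hx2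
  set lam := ((2:ℝ) ^ (n + 1) - ‖x‖) / e with hlamdef
  have hlam0 : 0 ≤ lam := div_nonneg (by linarith) he.le
  have hlam1 : lam ≤ 1 := by rw [hlamdef, div_le_one he]; linarith
  have h1lam : 1 - lam = (‖x‖ - e) / e := by
    rw [hlamdef, hp1]; field_simp; ring
  by_cases hy2 : e ≤ ‖y‖
  · -- same annulus
    have hy2' : ‖y‖ ≤ (2:ℝ) ^ (n + 1) := hyx.trans hx2
    have hfy := hf y hy n hy2 hy2'
    set mu := ((2:ℝ) ^ (n + 1) - ‖y‖) / e with hmudef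
    have key0 : ∀ (l m : ℝ) (A B C D : Y), (l • A + (1 - l) • B) - (m • C + (1 - m) • D)
        = l • (A - C) + (1 - l) • (B - D) + (l - m) • (C - D) := by
      intros; module
    have key : f x - f y = lam • (fn n x - fn n y)
        + (1 - lam) • (fn (n+1) x - fn (n+1) y)
        + (lam - mu) • (fn n y - fn (n+1) y) := by
      rw [hfx, hfy]; exact key0 lam mu _ _ _ _
    have hx2' : ‖x‖ ≤ (2:ℝ) ^ (n + 1 + 1) := by rw [hp2]; linarith
    have hy2'' : ‖y‖ ≤ (2:ℝ) ^ (n + 1 + 1) := by rw [hp2]; linarith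
    have A1 := (hfn n x hx y hy hx2 hy2').2
    have A2 := (hfn (n+1) x hx y hy hx2' hy2'').2
    have C1 := (hnorm n y hy hy2').2
    have D1 := (hnorm (n+1) y hy hy2'').2
    have habs3 : |lam - mu| ≤ ‖x - y‖ / e := by
      rw [hlamdef, hmudef, div_sub_div_same, abs_div, abs_of_pos he]
      gcongr
      calc |2 ^ (n+1) - ‖x‖ - (2 ^ (n+1) - ‖y‖)| = |‖y‖ - ‖x‖| := by ring_nf
        _ ≤ ‖y - x‖ := abs_norm_sub_norm_le y x
        _ = ‖x - y‖ := norm_sub_rev y x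
    have hCD : ‖fn n y - fn (n+1) y‖ ≤ 4 * (1 + ε₀) * e := by
      calc ‖fn n y - fn (n+1) y‖ ≤ ‖fn n y‖ + ‖fn (n+1) y‖ := norm_sub_le _ _
        _ ≤ 4 * (1 + ε₀) * e := by nlinarith [hp1]
    calc ‖f x - f y‖ ≤ ‖lam • (fn n x - fn n y)‖
          + ‖(1 - lam) • (fn (n+1) x - fn (n+1) y)‖
          + ‖(lam - mu) • (fn n y - fn (n+1) y)‖ := by
          rw [key]; exact norm_add₃_le
      _ = lam * ‖fn n x - fn n y‖ + (1 - lam) * ‖fn (n+1) x - fn (n+1) y‖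
          + |lam - mu| * ‖fn n y - fn (n+1) y‖ := by
          rw [norm_smul, norm_smul, norm_smul, Real.norm_eq_abs, Real.norm_eq_abs,
            Real.norm_eq_abs, abs_of_nonneg hlam0, abs_of_nonneg (by linarith)]
      _ ≤ lam * ((1 + ε₀) * ‖x - y‖) + (1 - lam) * ((1 + ε₀) * ‖x - y‖)
          + (‖x - y‖ / e) * (4 * (1 + ε₀) * e) := by
          have t1 := mul_le_mul_of_nonneg_left A1 hlam0
          have t2 := mul_le_mul_of_nonneg_left A2 (by linarith : (0:ℝ) ≤ 1 - lam)
          have t3 := mul_le_mul habs3 hCD (norm_nonneg _) (div_nonneg hd0 he.le)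
          linarith
      _ = 5 * (1 + ε₀) * ‖x - y‖ := by field_simp; ring
      _ ≤ 9 * (1 + ε₀) * ‖x - y‖ := by nlinarith
  · -- adjacent annuli
    push_neg at hy2
    have hhalf : (2:ℝ) ^ (n - 1) = e / 2 := by
      have h := zpow_add_one₀ (by norm_num : (2:ℝ) ≠ 0) (n-1)
      rw [show n - 1 + 1 = n by ring] at h
      rw [hedef, h]; ring
    have hy1 : (2:ℝ) ^ (n - 1) ≤ ‖y‖ := by rw [hhalf]; linarith
    have hy1' : ‖y‖ ≤ (2:ℝ) ^ (n - 1 + 1) := by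
      rw [show n - 1 + 1 = n by ring]; exact hy2.le
    have hfy := hf y hy (n - 1) hy1 hy1'
    rw [show n - 1 + 1 = n by ring] at hfy
    set mu := ((2:ℝ) ^ n - ‖y‖) / (2:ℝ) ^ (n - 1) with hmudef
    have key0 : ∀ (l m : ℝ) (A B C D E : Y), (l • A + (1 - l) • B) - (m • E + (1 - m) • C)
        = l • (A - C) + (1 - l) • (B - D) + (1 - l) • D + (l - (1 - m)) • C + (- m) • E := by
      intros; module
    have key : f x - f y = lam • (fn n x - fn n y)
        + (1 - lam) • (fn (n+1) x - fn (n+1) y)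
        + (1 - lam) • fn (n+1) y
        + (lam - (1 - mu)) • fn n y
        + (- mu) • fn (n - 1) y := by
      rw [hfx, hfy]; exact key0 lam mu _ _ _ _ _
    have hx2' : ‖x‖ ≤ (2:ℝ) ^ (n + 1 + 1) := by rw [hp2]; linarith
    have hy2'' : ‖y‖ ≤ (2:ℝ) ^ (n + 1 + 1) := by rw [hp2]; linarith
    have hyn1 : ‖y‖ ≤ (2:ℝ) ^ (n + 1) := by rw [hp1]; linarith
    have A1 := (hfn n x hx y hy hx2 hyn1).2
    have A2 := (hfn (n+1) x hx y hy hx2' hy2'').2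
    have C1 := (hnorm n y hy hyn1).2
    have D1 := (hnorm (n+1) y hy hy2'').2
    have E1 := (hnorm (n-1) y hy hy1').2
    have hmu : mu = 2 * (e - ‖y‖) / e := by
      rw [hmudef, hhalf, hedef]; field_simp
    have hmu0 : 0 ≤ mu := by
      rw [hmu]; apply div_nonneg _ he.le; linarith
    -- coefficient bounds
    have hab : (‖x‖ - e) + (e - ‖y‖) ≤ ‖x - y‖ := by linarith
    have hb0 : (0:ℝ) ≤ e - ‖y‖ := by linarith
    have ha0 : (0:ℝ) ≤ ‖x‖ - e := by linarith
    have hcoef : |lam - (1 - mu)| ≤ 2 * ‖x - y‖ / e := by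
      have : lam - (1 - mu) = (2 * (e - ‖y‖) - (‖x‖ - e)) / e := by
        rw [hmu, hlamdef, hp1]; field_simp; ring
      rw [this, abs_div, abs_of_pos he, div_le_div_iff₀ he he]
      have habs : |2 * (e - ‖y‖) - (‖x‖ - e)| ≤ 2 * ((‖x‖ - e) + (e - ‖y‖)) := by
        rw [abs_le]; constructor <;> nlinarith
      nlinarith
    have hyE : ‖y‖ ≤ e := hy2.le
    -- term bounds
    have T1 : lam * ‖fn n x - fn n y‖ ≤ lam * ((1 + ε₀) * ‖x - y‖) :=
      mul_le_mul_of_nonneg_left A1 hlam0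
    have T2 : (1 - lam) * ‖fn (n+1) x - fn (n+1) y‖ ≤ (1 - lam) * ((1 + ε₀) * ‖x - y‖) :=
      mul_le_mul_of_nonneg_left A2 (by linarith)
    have T3 : (1 - lam) * ‖fn (n+1) y‖ ≤ (1 + ε₀) * ‖x - y‖ := by
      have h1 : (1 - lam) * ‖fn (n+1) y‖ ≤ ((‖x‖ - e) / e) * ((1 + ε₀) * e) := by
        rw [h1lam]
        apply mul_le_mul (le_refl _) _ (norm_nonneg _) (div_nonneg ha0 he.le)
        nlinarith
      calc (1 - lam) * ‖fn (n+1) y‖ ≤ ((‖x‖ - e) / e) * ((1 + ε₀) * e) := h1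
        _ = (1 + ε₀) * (‖x‖ - e) := by field_simp
        _ ≤ (1 + ε₀) * ‖x - y‖ := by nlinarith
    have T4 : |lam - (1 - mu)| * ‖fn n y‖ ≤ 2 * (1 + ε₀) * ‖x - y‖ := by
      have hC : ‖fn n y‖ ≤ (1 + ε₀) * e :=
        C1.trans (mul_le_mul_of_nonneg_left hyE (by linarith))
      calc |lam - (1 - mu)| * ‖fn n y‖ ≤ (2 * ‖x - y‖ / e) * ((1 + ε₀) * e) :=
            mul_le_mul hcoef hC (norm_nonneg _) (by positivity)
        _ = 2 * (1 + ε₀) * ‖x - y‖ := by field_simp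
    have T5 : mu * ‖fn (n - 1) y‖ ≤ 2 * (1 + ε₀) * ‖x - y‖ := by
      have hE : ‖fn (n - 1) y‖ ≤ (1 + ε₀) * e :=
        E1.trans (mul_le_mul_of_nonneg_left hyE (by linarith))
      have hmub : mu ≤ 2 * ‖x - y‖ / e := by
        rw [hmu, div_le_div_iff₀ he he]
        apply mul_le_mul_of_nonneg_right _ he.le
        linarith
      calc mu * ‖fn (n - 1) y‖ ≤ (2 * ‖x - y‖ / e) * ((1 + ε₀) * e) :=
            mul_le_mul hmub hE (norm_nonneg _) (by positivity)
        _ = 2 * (1 + ε₀) * ‖x - y‖ := by field_simp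
    calc ‖f x - f y‖ ≤ ‖lam • (fn n x - fn n y)‖
          + ‖(1 - lam) • (fn (n+1) x - fn (n+1) y)‖
          + ‖(1 - lam) • fn (n+1) y‖
          + ‖(lam - (1 - mu)) • fn n y‖
          + ‖(- mu) • fn (n - 1) y‖ := by
          rw [key]; exact norm_add₅_le' _ _ _ _ _
      _ = lam * ‖fn n x - fn n y‖ + (1 - lam) * ‖fn (n+1) x - fn (n+1) y‖
          + (1 - lam) * ‖fn (n+1) y‖ + |lam - (1 - mu)| * ‖fn n y‖
          + mu * ‖fn (n - 1) y‖ := by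
          rw [norm_smul, norm_smul, norm_smul, norm_smul, norm_smul]
          simp only [Real.norm_eq_abs, abs_of_nonneg hlam0,
            abs_of_nonneg (by linarith : (0:ℝ) ≤ 1 - lam), abs_neg, abs_of_nonneg hmu0]
      _ ≤ 9 * (1 + ε₀) * ‖x - y‖ := by nlinarith [T1, T2, T3, T4, T5, mul_nonneg (by linarith : (0:ℝ) ≤ 1 + ε₀) hd0]

/-- The gluing construction: interpolating between `(1+ε₀)`-bi-Lipschitz embeddings `f_n`
of the dyadic balls `B_n = {x ∈ M : ‖x‖ ≤ 2^(n+1)}` produces a `9(1+ε₀)`-Lipschitz map. -/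
theorem gluing_is_lipschitz {X Y : Type*} [NormedAddCommGroup X] [NormedAddCommGroup Y]
    [NormedSpace ℝ Y]
    (M : Set X) (hM : ∀ x ∈ M, x ≠ 0)
    (ε₀ : ℝ) (hε₀ : 0 ≤ ε₀)
    (fn : ℤ → X → Y)
    (hfn0 : ∀ n : ℤ, fn n 0 = 0)
    (hnorm : ∀ n : ℤ, ∀ x ∈ M, ‖x‖ ≤ (2 : ℝ) ^ (n + 1) →
      ‖x‖ ≤ ‖fn n x‖ ∧ ‖fn n x‖ ≤ (1 + ε₀) * ‖x‖)
    (hfn : ∀ n : ℤ, ∀ x ∈ M, ∀ y ∈ M, ‖x‖ ≤ (2 : ℝ) ^ (n + 1) → ‖y‖ ≤ (2 : ℝ) ^ (n + 1) →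
      ‖x - y‖ ≤ ‖fn n x - fn n y‖ ∧ ‖fn n x - fn n y‖ ≤ (1 + ε₀) * ‖x - y‖)
    (f : X → Y)
    (hf : ∀ x ∈ M, ∀ n : ℤ, (2 : ℝ) ^ n ≤ ‖x‖ → ‖x‖ ≤ (2 : ℝ) ^ (n + 1) →
      f x = ((((2 : ℝ) ^ (n + 1) - ‖x‖) / (2 : ℝ) ^ n) • fn n x)
          + ((1 - ((2 : ℝ) ^ (n + 1) - ‖x‖) / (2 : ℝ) ^ n) • fn (n + 1) x)) :
    ∀ x ∈ M, ∀ y ∈ M, ‖f x - f y‖ ≤ 9 * (1 + ε₀) * ‖x - y‖ := by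
  intro x hx y hy
  rcases le_total ‖y‖ ‖x‖ with h | h
  · exact gluing_aux M hM ε₀ hε₀ fn hnorm hfn f hf x hx y hy h
  · rw [norm_sub_rev (f x), ← neg_sub y x, norm_neg]
    exact gluing_aux M hM ε₀ hε₀ fn hnorm hfn f hf y hy x hx h
end

section
/- Let (K, d) be a compact metric space of diameter D > 0 and let μ : (0, D] → [0, ∞) be continuous and strictly decreasing with μ(D) = 0 and lim_{t→0} μ(t) = +∞. Then there exists a map f from K into the ℓ₂-sum (Σ_k ℓ_∞(R_k))₂ of finite-dimensional ℓ_∞ spaces such that for all x, y ∈ K: (1/2)·d(x,y)/μ̃(d(x,y)) ≤ ‖f(x) − f(y)‖ ≤ (π/√6)·d(x,y), where μ̃(t) = max(μ(t), 1). -/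
open Filter Metric
open scoped ENNReal

lemma exists_fin_net (K : Type*) [MetricSpace K] [CompactSpace K] [Nonempty K]
    {ε : ℝ} (hε : 0 < ε) :
    ∃ n : ℕ, ∃ s : Fin n → K, ∀ x : K, ∃ i, dist x (s i) < ε := by
  obtain ⟨t, ht, hcov⟩ :=
    (Metric.totallyBounded_iff.mp (isCompact_univ : IsCompact (Set.univ : Set K)).totallyBounded) ε hε
  refine ⟨ht.toFinset.card, fun i => (ht.toFinset.equivFin.symm i : K), fun x => ?_⟩
  have hx := hcov (Set.mem_univ x)
  simp only [Set.mem_iUnion] at hx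
  obtain ⟨y, hy, hxy⟩ := hx
  have hy' : y ∈ ht.toFinset := ht.mem_toFinset.mpr hy
  refine ⟨ht.toFinset.equivFin ⟨y, hy'⟩, ?_⟩
  simpa using hxy

lemma sum_inv_sq_ge (k0 : ℕ) (hk0 : 1 ≤ k0) (n : ℕ) :
    (1:ℝ)/k0 - 1/(k0+n) ≤ ∑ i ∈ Finset.range n, (1/((k0:ℝ)+i))^2 := by
  induction n with
  | zero => simp
  | succ n ih =>
    rw [Finset.sum_range_succ]
    have hpos : (0:ℝ) < (k0:ℝ) + n := by positivity
    have hpos' : (0:ℝ) < (k0:ℝ) + n + 1 := by positivity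
    have key : (1:ℝ)/((k0:ℝ)+n) - 1/((k0:ℝ)+n+1) ≤ (1/((k0:ℝ)+n))^2 := by
      rw [div_sub_div _ _ (ne_of_gt hpos) (ne_of_gt hpos'), div_pow, one_pow]
      rw [div_le_div_iff₀ (by positivity) (by positivity)]
      nlinarith [sq_nonneg ((k0:ℝ)+n)]
    push_cast
    have h2 : (k0:ℝ)+((n:ℝ)+1) = (k0:ℝ)+(n:ℝ)+1 := by ring
    rw [h2]
    linarith


/-- Nearly bi-Lipschitz embedding of a compact metric space into an `ℓ₂`-sum of
finite-dimensional `ℓ_∞` spaces, with lower modulus controlled by `μ`. -/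
theorem compact_embedding_into_l2_sum_linfty {K : Type*} [MetricSpace K] [CompactSpace K]
    [Nonempty K]
    (D : ℝ) (hD : 0 < D) (hdiam : Metric.diam (Set.univ : Set K) = D)
    (μ : ℝ → ℝ)
    (hcont : ContinuousOn μ (Set.Ioc 0 D))
    (hanti : StrictAntiOn μ (Set.Ioc 0 D))
    (hpos : ∀ t ∈ Set.Ioc (0 : ℝ) D, 0 ≤ μ t)
    (hD0 : μ D = 0)
    (htop : Tendsto μ (nhdsWithin 0 (Set.Ioi 0)) atTop) :
    ∃ (N : ℕ → ℕ) (f : K → lp (fun k : ℕ => (Fin (N k) → ℝ)) 2),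
      ∀ x y : K,
        (x ≠ y → (1 / 2) * (dist x y / max (μ (dist x y)) 1) ≤ ‖f x - f y‖) ∧
        ‖f x - f y‖ ≤ (Real.pi / Real.sqrt 6) * dist x y := by
  classical
  obtain ⟨t0⟩ := (inferInstance : Nonempty K)
  have hbdd : Bornology.IsBounded (Set.univ : Set K) :=
    (isCompact_univ : IsCompact (Set.univ : Set K)).isBounded
  have hdle : ∀ a b : K, dist a b ≤ D := by
    intro a b
    have := dist_le_diam_of_mem hbdd (Set.mem_univ a) (Set.mem_univ b)
    rwa [hdiam] at this
  -- choose the scales T k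
  have hT : ∀ k : ℕ, ∃ t, t ∈ Set.Ioc (0:ℝ) D ∧ (k:ℝ) ≤ μ t := by
    intro k
    have h1 : ∀ᶠ t in nhdsWithin 0 (Set.Ioi 0), (k:ℝ) ≤ μ t :=
      htop.eventually (eventually_ge_atTop _)
    have h2 : Set.Ioc (0:ℝ) D ∈ nhdsWithin 0 (Set.Ioi 0) :=
      Ioc_mem_nhdsGT hD
    have h3 : ∀ᶠ t in nhdsWithin (0:ℝ) (Set.Ioi 0), t ∈ Set.Ioc (0:ℝ) D :=
      eventually_of_mem h2 fun t ht => ht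
    exact (h3.and h1).exists
  choose T hTmem hTge using hT
  -- choose the nets
  have hnet : ∀ k : ℕ, ∃ n : ℕ, ∃ s : Fin n → K, ∀ x : K, ∃ i, dist x (s i) < T k / 8 := by
    intro k
    exact exists_fin_net K (by have := (hTmem k).1; positivity)
  choose N S hS using hnet
  -- the building blocks
  set Φ : ∀ k : ℕ, K → (Fin (N k) → ℝ) :=
    fun k x => ((k:ℝ))⁻¹ • (fun i => dist x (S k i) - dist t0 (S k i)) with hΦ
  have hcoord : ∀ k (x y : K) (i : Fin (N k)),
      Φ k x i - Φ k y i = (k:ℝ)⁻¹ * (dist x (S k i) - dist y (S k i)) := by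
    intro k x y i
    simp only [hΦ, Pi.smul_apply, smul_eq_mul]
    ring
  have hub : ∀ k (x y : K), ‖Φ k x - Φ k y‖ ≤ (k:ℝ)⁻¹ * dist x y := by
    intro k x y
    rw [pi_norm_le_iff_of_nonneg (by positivity)]
    intro i
    rw [Pi.sub_apply, hcoord, Real.norm_eq_abs, abs_mul,
      abs_of_nonneg (by positivity : (0:ℝ) ≤ (k:ℝ)⁻¹)]
    gcongr
    exact abs_dist_sub_le _ _ _
  -- summability gauge
  have hbase : ∀ C : ℝ, Summable (fun k : ℕ => ((k:ℝ)⁻¹ * C)^2) := by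
    intro C
    have h := (hasSum_zeta_two.summable).mul_left (C^2)
    refine h.congr fun k => ?_
    rw [one_div, mul_pow]
    ring
  have hsumd : ∀ x y : K, Summable (fun k : ℕ => ‖Φ k x - Φ k y‖^2) := by
    intro x y
    refine Summable.of_nonneg_of_le (fun k => sq_nonneg _) (fun k => ?_) (hbase (dist x y))
    exact pow_le_pow_left₀ (norm_nonneg _) (hub k x y) 2
  -- membership in lp
  have hmem : ∀ x : K, Memℓp (fun k => Φ k x) 2 := by
    intro x
    apply memℓp_gen
    have h2 : ((2:ℝ≥0∞)).toReal = (2:ℝ) := by norm_num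
    rw [h2]
    simp only [Real.rpow_two]
    have : ∀ k : ℕ, ‖Φ k x‖ ≤ (k:ℝ)⁻¹ * dist x t0 := by
      intro k
      have := hub k x t0
      have hz : Φ k t0 = 0 := by
        funext i
        simp [hΦ]
      rwa [hz, sub_zero] at this
    refine Summable.of_nonneg_of_le (fun k => sq_nonneg _) (fun k => ?_) (hbase (dist x t0))
    exact pow_le_pow_left₀ (norm_nonneg _) (this k) 2
  refine ⟨N, fun x => ⟨fun k => Φ k x, hmem x⟩, fun x y => ?_⟩
  set f : K → lp (fun k : ℕ => (Fin (N k) → ℝ)) 2 :=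
    fun x => ⟨fun k => Φ k x, hmem x⟩ with hf
  -- norm squared formula
  have hp2 : (0:ℝ) < ((2:ℝ≥0∞)).toReal := by norm_num
  have hnsq : ‖f x - f y‖^2 = ∑' k, ‖Φ k x - Φ k y‖^2 := by
    have hcoe : ∀ k, (f x - f y : lp _ 2) k = Φ k x - Φ k y := fun k => by
      rw [lp.coeFn_sub]; rfl
    have h := lp.norm_rpow_eq_tsum (p := 2) hp2 (f x - f y)
    rw [show ((2:ℝ≥0∞)).toReal = (2:ℝ) by norm_num] at h
    simp only [Real.rpow_two, hcoe] at h
    exact h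
  constructor
  · -- lower bound
    intro hxy
    set d := dist x y with hd
    have hd0 : 0 < d := dist_pos.mpr hxy
    have hdD : d ≤ D := hdle x y
    set m := max (μ d) 1 with hm
    have hm1 : (1:ℝ) ≤ m := le_max_right _ _
    set k0 := ⌈m⌉₊ with hk0
    have hk01 : 1 ≤ k0 := Nat.one_le_iff_ne_zero.mpr (by
      have : (0:ℝ) < m := by linarith
      exact Nat.ceil_pos.mpr this |>.ne')
    have hk0pos : (0:ℝ) < (k0:ℝ) := by exact_mod_cast Nat.pos_of_ne_zero (by omega)
    have hk0m : μ d ≤ (k0:ℝ) := le_trans (le_max_left _ _) (Nat.le_ceil m)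
    have hk02m : (k0:ℝ) ≤ 2*m := by
      have := Nat.ceil_lt_add_one (by linarith : (0:ℝ) ≤ m)
      linarith
    have hTd : ∀ k : ℕ, k0 ≤ k → T k ≤ d := by
      intro k hk
      by_contra hcon
      push_neg at hcon
      have h1 : μ (T k) < μ d := hanti ⟨hd0, hdD⟩ (hTmem k) hcon
      have h2 : (k0:ℝ) ≤ (k:ℝ) := by exact_mod_cast hk
      have := hTge k
      linarith
    have hlow : ∀ k : ℕ, k0 ≤ k → (k:ℝ)⁻¹ * (3/4 * d) ≤ ‖Φ k x - Φ k y‖ := by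
      intro k hk
      obtain ⟨i, hi⟩ := hS k y
      have hTk : T k ≤ d := hTd k hk
      have htri : d ≤ dist x (S k i) + dist y (S k i) := by
        rw [hd]
        exact (dist_triangle x (S k i) y).trans (by rw [dist_comm (S k i) y])
      have hcval : 3/4 * d ≤ dist x (S k i) - dist y (S k i) := by
        have : dist y (S k i) < d / 8 := lt_of_lt_of_le hi (by linarith)
        linarith
      have hkinv : (0:ℝ) ≤ (k:ℝ)⁻¹ := by positivity
      calc (k:ℝ)⁻¹ * (3/4 * d) ≤ (k:ℝ)⁻¹ * (dist x (S k i) - dist y (S k i)) := by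
            apply mul_le_mul_of_nonneg_left hcval hkinv
        _ ≤ |(k:ℝ)⁻¹ * (dist x (S k i) - dist y (S k i))| := le_abs_self _
        _ = ‖(Φ k x - Φ k y) i‖ := by rw [Pi.sub_apply, hcoord, Real.norm_eq_abs]
        _ ≤ ‖Φ k x - Φ k y‖ := norm_le_pi_norm _ i
    -- sum up over k0 ≤ k < 16 k0
    have hFsum : (3/4*d)^2 * ((1:ℝ)/k0 - 1/(k0 + 15*k0)) ≤ ∑' k, ‖Φ k x - Φ k y‖^2 := by
      have step1 : ∑ i ∈ Finset.range (15*k0), ‖Φ (k0 + i) x - Φ (k0 + i) y‖^2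
          ≤ ∑' k, ‖Φ k x - Φ k y‖^2 := by
        have := Summable.sum_le_tsum ((Finset.range (15*k0)).map (addLeftEmbedding k0))
          (fun k _ => sq_nonneg _) (hsumd x y)
        rwa [Finset.sum_map] at this
      have step2 : (3/4*d)^2 * ((1:ℝ)/k0 - 1/(k0 + 15*k0))
          ≤ ∑ i ∈ Finset.range (15*k0), ‖Φ (k0 + i) x - Φ (k0 + i) y‖^2 := by
        have h1 : ∀ i, ((3/4*d) * (1/((k0:ℝ)+i)))^2 ≤ ‖Φ (k0 + i) x - Φ (k0 + i) y‖^2 := by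
          intro i
          have hki : ((k0 + i : ℕ):ℝ) = (k0:ℝ) + i := by push_cast; ring
          have := hlow (k0 + i) (Nat.le_add_right _ _)
          rw [hki] at this
          have hle : (3/4*d) * (1/((k0:ℝ)+i)) ≤ ‖Φ (k0 + i) x - Φ (k0 + i) y‖ := by
            rw [mul_one_div, div_eq_inv_mul]
            exact this
          exact pow_le_pow_left₀ (by positivity) hle 2
        calc (3/4*d)^2 * ((1:ℝ)/k0 - 1/(k0 + 15*k0))
            ≤ (3/4*d)^2 * ∑ i ∈ Finset.range (15*k0), (1/((k0:ℝ)+i))^2 := by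
              have hc : ((k0:ℝ) + (15*k0 : ℕ)) = ((k0:ℝ) + 15*k0) := by push_cast; ring
              have := sum_inv_sq_ge k0 hk01 (15*k0)
              rw [hc] at this
              exact mul_le_mul_of_nonneg_left this (by positivity)
          _ = ∑ i ∈ Finset.range (15*k0), ((3/4*d) * (1/((k0:ℝ)+i)))^2 := by
              rw [Finset.mul_sum]
              congr 1
              funext i
              ring
          _ ≤ _ := Finset.sum_le_sum (fun i _ => h1 i)
      linarith
    -- conclude
    have hsq : ((1/2) * (d / m))^2 ≤ ‖f x - f y‖^2 := by
      rw [hnsq]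
      refine le_trans ?_ hFsum
      have hsimp : (3/4*d)^2 * ((1:ℝ)/k0 - 1/(k0 + 15*k0)) = (9/16) * d^2 * (15/(16*k0)) := by
        field_simp
        ring
      rw [hsimp]
      have hmne : m ≠ 0 := by intro h; rw [h] at hm1; linarith
      have e1 : ((1:ℝ)/2*(d/m))^2 = d^2 * (1/(4*m^2)) := by
        field_simp
        ring
      have e2 : (9:ℝ)/16*d^2*(15/(16*(k0:ℝ))) = d^2 * (135/(256*(k0:ℝ))) := by ring
      rw [e1, e2]
      apply mul_le_mul_of_nonneg_left ?_ (sq_nonneg d)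
      rw [div_le_div_iff₀ (by positivity) (by positivity)]
      nlinarith [hm1, hk02m]
    have h1 : (0:ℝ) ≤ (1/2) * (d / m) := by positivity
    have := Real.sqrt_le_sqrt hsq
    rwa [Real.sqrt_sq h1, Real.sqrt_sq (norm_nonneg _)] at this
  · -- upper bound
    have hsq : ‖f x - f y‖^2 ≤ ((Real.pi / Real.sqrt 6) * dist x y)^2 := by
      rw [hnsq]
      have h1 : ∑' k, ‖Φ k x - Φ k y‖^2 ≤ ∑' k : ℕ, ((k:ℝ)⁻¹ * dist x y)^2 := by
        refine Summable.tsum_le_tsum (fun k => ?_) (hsumd x y) (hbase (dist x y))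
        exact pow_le_pow_left₀ (norm_nonneg _) (hub k x y) 2
      have h2 : ∑' k : ℕ, ((k:ℝ)⁻¹ * dist x y)^2 = (dist x y)^2 * (Real.pi^2/6) := by
        have := (hasSum_zeta_two.mul_left ((dist x y)^2)).tsum_eq
        rw [← this]
        congr 1
        funext k
        rw [one_div, mul_pow]
        ring
      have h3 : ((Real.pi / Real.sqrt 6) * dist x y)^2 = (dist x y)^2 * (Real.pi^2/6) := by
        rw [mul_pow, div_pow, Real.sq_sqrt (by norm_num : (0:ℝ) ≤ 6)]
        ring
      rw [h3]
      linarith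
    have h1 : (0:ℝ) ≤ (Real.pi / Real.sqrt 6) * dist x y := by
      have := Real.pi_pos
      have h6 : (0:ℝ) < Real.sqrt 6 := Real.sqrt_pos.mpr (by norm_num)
      positivity
    have := Real.sqrt_le_sqrt hsq
    rwa [Real.sqrt_sq (norm_nonneg _), Real.sqrt_sq h1] at this
end

section
/- A weakly null spreading basic sequence in a Banach space is unconditional; consequently, in a reflexive Banach space every spreading basic sequence is unconditional. -/
open Filter Metric

section Aux

variable {X : Type*} [NormedAddCommGroup X] [NormedSpace ℝ X]

/-- Mazur-type lemma: a weakly null sequence admits convex combinations of far tails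
with arbitrarily small norm, supported on a finite window. -/
lemma aux_mazur_small (x : ℕ → X)
    (hweak : ∀ φ : X →L[ℝ] ℝ, Tendsto (fun n => φ (x n)) atTop (nhds 0))
    (N : ℕ) {δ : ℝ} (hδ : 0 < δ) :
    ∃ M : ℕ, N < M ∧ ∃ v ∈ convexHull ℝ (x '' Set.Ico N M), ‖v‖ ≤ δ := by
  classical
  have h0 : (0 : X) ∈ closure (convexHull ℝ (x '' Set.Ici N)) := by
    by_contra h
    obtain ⟨f, u, hf0, hfb⟩ := geometric_hahn_banach_point_closed
      ((convex_convexHull ℝ _).closure) isClosed_closure h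
    have hu : (0 : ℝ) < u := by simpa using hf0
    have h1 : ∀ᶠ m in atTop, f (x m) < u := (hweak f).eventually_lt_const hu
    obtain ⟨m, hm1, hm2⟩ := (h1.and (eventually_ge_atTop N)).exists
    have := hfb (x m) (subset_closure (subset_convexHull ℝ _ ⟨m, hm2, rfl⟩))
    linarith
  obtain ⟨v, hv, hvd⟩ := Metric.mem_closure_iff.1 h0 δ hδ
  rw [convexHull_eq] at hv
  obtain ⟨ι, t, w, z, hw0, hw1, hz, hcm⟩ := hv
  set g : ι → ℕ := fun i => if h : ∃ m, N ≤ m ∧ x m = z i then h.choose else N with hg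
  have hgz : ∀ i ∈ t, N ≤ g i ∧ x (g i) = z i := by
    intro i hi
    obtain ⟨m, hm, hxm⟩ := hz i hi
    have hex : ∃ m, N ≤ m ∧ x m = z i := ⟨m, hm, hxm⟩
    simp only [hg, dif_pos hex]
    exact hex.choose_spec
  have ht : t.Nonempty := Finset.nonempty_of_ne_empty (by rintro rfl; simp at hw1)
  obtain ⟨i0, hi0⟩ := ht
  refine ⟨t.sup g + 1, ?_, v, ?_, ?_⟩
  · exact Nat.lt_succ_of_le (le_trans (hgz i0 hi0).1 (Finset.le_sup hi0))
  · rw [← hcm]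
    exact Finset.centerMass_mem_convexHull t hw0 (by rw [hw1]; norm_num)
      (fun i hi => ⟨g i, ⟨(hgz i hi).1, Nat.lt_succ_of_le (Finset.le_sup hi)⟩, (hgz i hi).2⟩)
  · rw [dist_zero_left] at hvd
    exact hvd.le

/-- Window replacement lemma: if coefficients at positions outside `A` come from single
far points in increasing windows, and positions in `A` carry convex combinations from
their windows, the norm is still bounded by the spreading bound. -/
lemma aux_window (x : ℕ → X) {S : ℝ}
    {n : ℕ} {a : Fin n → ℝ}
    (hspread2 : ∀ k : ℕ → ℕ, StrictMono k → ‖∑ i : Fin n, a i • x (k i)‖ ≤ S)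
    {b : ℕ → ℕ} (hb : StrictMono b)
    (A : Finset (Fin n)) (v : Fin n → X)
    (hv1 : ∀ i : Fin n, i ∉ A → ∃ m, m ∈ Set.Ico (b i) (b ((i : ℕ) + 1)) ∧ v i = x m)
    (hv2 : ∀ i ∈ A, v i ∈ convexHull ℝ (x '' Set.Ico (b (i : ℕ)) (b ((i : ℕ) + 1)))) :
    ‖∑ i : Fin n, a i • v i‖ ≤ S := by
  classical
  revert hv1 hv2
  induction A using Finset.induction generalizing v with
  | empty =>
    intro hv1 _
    choose m hm hxm using fun i => hv1 i (Finset.notMem_empty i)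
    set k : ℕ → ℕ := fun p => if h : p < n then m ⟨p, h⟩ else b n + p with hk
    have hkmono : StrictMono k := by
      apply strictMono_nat_of_lt_succ
      intro p
      by_cases h : p + 1 < n
      · have h' : p < n := Nat.lt_of_succ_lt h
        simp only [hk, dif_pos h, dif_pos h']
        exact lt_of_lt_of_le (hm ⟨p, h'⟩).2 (hm ⟨p+1, h⟩).1
      · by_cases h' : p < n
        · simp only [hk, dif_pos h', dif_neg h]
          have h1 : m ⟨p, h'⟩ < b (p + 1) := (hm ⟨p, h'⟩).2
          have h2 : b (p + 1) ≤ b n := hb.monotone (by omega)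
          omega
        · simp only [hk, dif_neg h', dif_neg h]
          omega
    calc ‖∑ i : Fin n, a i • v i‖ = ‖∑ i : Fin n, a i • x (k i)‖ := by
          congr 1
          refine Finset.sum_congr rfl fun i _ => ?_
          rw [hxm i]
          congr 1
          simp only [hk, dif_pos i.isLt]
      _ ≤ S := hspread2 k hkmono
  | @insert j A' hj ih =>
    intro hv1 hv2
    have hvj := hv2 j (Finset.mem_insert_self j A')
    rw [convexHull_eq] at hvj
    obtain ⟨ι, t, w, z, hw0, hw1, hz, hcm⟩ := hvj
    have key : ∀ s ∈ t, ‖∑ i : Fin n, a i • Function.update v j (z s) i‖ ≤ S := by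
      intro s hs
      apply ih
      · intro i hi
        by_cases h : i = j
        · subst h
          obtain ⟨p, hp, hxp⟩ := hz s hs
          exact ⟨p, hp, by rw [Function.update_self, hxp]⟩
        · rw [Function.update_of_ne h]
          exact hv1 i (by simp [Finset.mem_insert, h, hi])
      · intro i hi
        have h : i ≠ j := fun e => hj (e ▸ hi)
        rw [Function.update_of_ne h]
        exact hv2 i (Finset.mem_insert_of_mem hi)
    have hvjeq : v j = ∑ s ∈ t, w s • z s := by
      rw [← hcm, Finset.centerMass_eq_of_sum_1 _ _ hw1]
    have upd : ∀ (y : X),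
        (∑ i : Fin n, a i • Function.update v j y i)
          = a j • y + ∑ i ∈ Finset.univ.erase j, a i • v i := by
      intro y
      rw [← Finset.add_sum_erase _ _ (Finset.mem_univ j), Function.update_self]
      congr 1
      refine Finset.sum_congr rfl fun i hi => ?_
      rw [Function.update_of_ne (Finset.ne_of_mem_erase hi)]
    have hsum : (∑ i : Fin n, a i • v i)
        = ∑ s ∈ t, w s • (∑ i : Fin n, a i • Function.update v j (z s) i) := by
      have hR : ∀ s ∈ t, w s • (∑ i : Fin n, a i • Function.update v j (z s) i)
          = w s • (a j • z s) + w s • (∑ i ∈ Finset.univ.erase j, a i • v i) := by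
        intro s _
        rw [upd, smul_add]
      rw [Finset.sum_congr rfl hR, Finset.sum_add_distrib, ← Finset.sum_smul, hw1, one_smul,
        ← Finset.add_sum_erase _ (fun i => a i • v i) (Finset.mem_univ j)]
      congr 1
      rw [hvjeq, Finset.smul_sum]
      refine Finset.sum_congr rfl fun s _ => ?_
      rw [smul_comm]
    rw [hsum]
    calc ‖∑ s ∈ t, w s • (∑ i : Fin n, a i • Function.update v j (z s) i)‖
        ≤ ∑ s ∈ t, ‖w s • (∑ i : Fin n, a i • Function.update v j (z s) i)‖ :=
          norm_sum_le _ _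
      _ ≤ ∑ s ∈ t, w s * S := by
          refine Finset.sum_le_sum fun s hs => ?_
          rw [norm_smul, Real.norm_eq_abs, abs_of_nonneg (hw0 s hs)]
          exact mul_le_mul_of_nonneg_left (key s hs) (hw0 s hs)
      _ = S := by rw [← Finset.sum_mul, hw1, one_mul]

/-- Suppression unconditionality with constant `C²` for a weakly null spreading sequence. -/
lemma aux_suppression (x : ℕ → X)
    (C : ℝ) (hC : 1 ≤ C)
    (hspread : ∀ (n : ℕ) (a : Fin n → ℝ) (k : ℕ → ℕ), StrictMono k →
      ‖∑ i : Fin n, a i • x (i : ℕ)‖ ≤ C * ‖∑ i : Fin n, a i • x (k i)‖ ∧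
      ‖∑ i : Fin n, a i • x (k i)‖ ≤ C * ‖∑ i : Fin n, a i • x (i : ℕ)‖)
    (hweak : ∀ φ : X →L[ℝ] ℝ, Tendsto (fun n => φ (x n)) atTop (nhds 0))
    (n : ℕ) (a : Fin n → ℝ) (A : Finset (Fin n)) :
    ‖∑ i : Fin n, (if i ∈ A then 0 else a i) • x (i : ℕ)‖
      ≤ C * C * ‖∑ i : Fin n, a i • x (i : ℕ)‖ := by
  classical
  have hC0 : (0 : ℝ) < C := lt_of_lt_of_le one_pos hC
  set S : ℝ := ‖∑ i : Fin n, a i • x (i : ℕ)‖ with hS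
  apply le_of_forall_pos_le_add
  intro η hη
  set T : ℝ := (∑ i : Fin n, |a i|) + 1 with hT
  have hT0 : 0 < T := by positivity
  set δ : ℝ := η / (C * T) with hδdef
  have hδ : 0 < δ := by positivity
  choose F hF V hV1 hV2 using fun N => aux_mazur_small x hweak N hδ
  set b : ℕ → ℕ := fun p => Nat.rec 0 (fun p prev =>
      if ∃ hp : p < n, (⟨p, hp⟩ : Fin n) ∈ A then F prev else prev + 1) p with hbdef
  have hbsucc : ∀ p, b (p + 1) =
      if ∃ hp : p < n, (⟨p, hp⟩ : Fin n) ∈ A then F (b p) else b p + 1 := fun p => rfl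
  have hbmono : StrictMono b := by
    apply strictMono_nat_of_lt_succ
    intro p
    rw [hbsucc]
    split
    · exact hF (b p)
    · omega
  set v : Fin n → X := fun i => if i ∈ A then V (b i) else x (b i) with hvdef
  have hwin : ‖∑ i : Fin n, a i • v i‖ ≤ C * S := by
    refine aux_window x (fun k hk => (hspread n a k hk).2) hbmono A v ?_ ?_
    · intro i hi
      refine ⟨b i, ⟨le_refl _, hbmono (lt_add_one _)⟩, ?_⟩
      simp only [hvdef, if_neg hi]
    · intro i hi
      have hcond : ∃ hp : (i : ℕ) < n, (⟨(i : ℕ), hp⟩ : Fin n) ∈ A := ⟨i.isLt, by simpa using hi⟩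
      have hb1 : b ((i : ℕ) + 1) = F (b i) := by rw [hbsucc, if_pos hcond]
      rw [hb1]
      simp only [hvdef, if_pos hi]
      exact hV1 (b i)
  have h2 : (∑ i : Fin n, (if i ∈ A then 0 else a i) • x (b (i : ℕ)))
      = (∑ i : Fin n, a i • v i) - ∑ i : Fin n, (if i ∈ A then a i else 0) • V (b (i : ℕ)) := by
    rw [← Finset.sum_sub_distrib]
    refine Finset.sum_congr rfl fun i _ => ?_
    by_cases h : i ∈ A <;> simp [hvdef, h]
  have h3 : ‖∑ i : Fin n, (if i ∈ A then a i else 0) • V (b (i : ℕ))‖ ≤ T * δ := by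
    calc ‖∑ i : Fin n, (if i ∈ A then a i else 0) • V (b (i : ℕ))‖
        ≤ ∑ i : Fin n, ‖(if i ∈ A then a i else 0) • V (b (i : ℕ))‖ := norm_sum_le _ _
      _ ≤ ∑ i : Fin n, |a i| * δ := by
          refine Finset.sum_le_sum fun i _ => ?_
          rw [norm_smul, Real.norm_eq_abs]
          by_cases h : i ∈ A
          · rw [if_pos h]
            exact mul_le_mul (le_refl _) (hV2 (b i)) (norm_nonneg _) (abs_nonneg _)
          · rw [if_neg h]
            simp
            positivity
      _ = (∑ i : Fin n, |a i|) * δ := by rw [Finset.sum_mul]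
      _ ≤ T * δ := by
          apply mul_le_mul_of_nonneg_right _ hδ.le
          rw [hT]; linarith
  have h4 : ‖∑ i : Fin n, (if i ∈ A then 0 else a i) • x (b (i : ℕ))‖ ≤ C * S + T * δ := by
    rw [h2]
    calc ‖(∑ i : Fin n, a i • v i) - ∑ i : Fin n, (if i ∈ A then a i else 0) • V (b (i : ℕ))‖
        ≤ ‖∑ i : Fin n, a i • v i‖ + ‖∑ i : Fin n, (if i ∈ A then a i else 0) • V (b (i : ℕ))‖ :=
          norm_sub_le _ _
      _ ≤ C * S + T * δ := add_le_add hwin h3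
  have h5 := (hspread n (fun i => if i ∈ A then 0 else a i) b hbmono).1
  have hδη : C * (T * δ) = η := by
    rw [hδdef]
    field_simp
  calc ‖∑ i : Fin n, (if i ∈ A then 0 else a i) • x (i : ℕ)‖
      ≤ C * ‖∑ i : Fin n, (if i ∈ A then 0 else a i) • x (b (i : ℕ))‖ := h5
    _ ≤ C * (C * S + T * δ) := mul_le_mul_of_nonneg_left h4 hC0.le
    _ = C * C * S + η := by rw [mul_add, ← hδη]; ring
end Aux

/-- A weakly null spreading basic sequence in a Banach space is unconditional. -/
theorem weakly_null_spreading_basic_unconditional {X : Type*} [NormedAddCommGroup X]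
    [NormedSpace ℝ X] [CompleteSpace X]
    (x : ℕ → X) (hnz : ∀ n, x n ≠ 0)
    (Kb : ℝ) (hKb : 1 ≤ Kb)
    (hbasic : ∀ (a : ℕ → ℝ) (m n : ℕ), m ≤ n →
      ‖∑ i ∈ Finset.range m, a i • x i‖ ≤ Kb * ‖∑ i ∈ Finset.range n, a i • x i‖)
    (C : ℝ) (hC : 1 ≤ C)
    (hspread : ∀ (n : ℕ) (a : Fin n → ℝ) (k : ℕ → ℕ), StrictMono k →
      ‖∑ i : Fin n, a i • x (i : ℕ)‖ ≤ C * ‖∑ i : Fin n, a i • x (k i)‖ ∧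
      ‖∑ i : Fin n, a i • x (k i)‖ ≤ C * ‖∑ i : Fin n, a i • x (i : ℕ)‖)
    (hweak : ∀ φ : X →L[ℝ] ℝ, Tendsto (fun n => φ (x n)) atTop (nhds 0)) :
    ∃ K : ℝ, 0 < K ∧ ∀ (n : ℕ) (a ε : Fin n → ℝ), (∀ i, ε i = 1 ∨ ε i = -1) →
      ‖∑ i : Fin n, (ε i * a i) • x (i : ℕ)‖ ≤ K * ‖∑ i : Fin n, a i • x (i : ℕ)‖ := by
  classical
  have hC0 : (0 : ℝ) < C := lt_of_lt_of_le one_pos hC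
  refine ⟨2 * C * C, by positivity, ?_⟩
  intro n a ε hε
  set A₁ : Finset (Fin n) := Finset.univ.filter (fun i => ¬ ε i = 1) with hA₁
  set A₂ : Finset (Fin n) := Finset.univ.filter (fun i => ε i = 1) with hA₂
  have e1 := aux_suppression x C hC hspread hweak n a A₁
  have e2 := aux_suppression x C hC hspread hweak n a A₂
  have hid : ∀ i : Fin n, (ε i * a i) • x (i : ℕ)
      = (if i ∈ A₁ then 0 else a i) • x (i : ℕ) - (if i ∈ A₂ then 0 else a i) • x (i : ℕ) := by
    intro i
    rw [← sub_smul]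
    congr 1
    rcases hε i with h | h
    · simp [hA₁, hA₂, h]
    · have h1 : ¬ ε i = 1 := by rw [h]; norm_num
      simp only [hA₁, hA₂, Finset.mem_filter, Finset.mem_univ, true_and, if_pos h1, if_neg h1, h]
      norm_num
  calc ‖∑ i : Fin n, (ε i * a i) • x (i : ℕ)‖
      = ‖(∑ i : Fin n, (if i ∈ A₁ then 0 else a i) • x (i : ℕ))
          - ∑ i : Fin n, (if i ∈ A₂ then 0 else a i) • x (i : ℕ)‖ := by
        rw [← Finset.sum_sub_distrib]
        exact congrArg _ (Finset.sum_congr rfl fun i _ => hid i)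
    _ ≤ ‖∑ i : Fin n, (if i ∈ A₁ then 0 else a i) • x (i : ℕ)‖
          + ‖∑ i : Fin n, (if i ∈ A₂ then 0 else a i) • x (i : ℕ)‖ := norm_sub_le _ _
    _ ≤ 2 * C * C * ‖∑ i : Fin n, a i • x (i : ℕ)‖ := by linarith
end
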